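/- arXiv:2202.07485 — 3 statements merged into one kernel-verified Lean document; each statement's English description precedes it below -/
import Mathlib

section
/- Let n > s ≥ 1 and k be natural numbers. Then (1 - s/n)^k - (1 - s/(n-1))^k ≤ (1 - s/n)^k · k·s / ((n-1)(n-s)). -/
lemma one_sub_pow_le_aux (z : ℝ) (hz0 : 0 ≤ z) (hz1 : z ≤ 1) (k : ℕ) :
    1 - z ^ k ≤ (k : ℝ) * (1 - z) := by
  induction k with
  | zero => simp
  | succ k ih =>
    have hzk : z ^ k ≤ 1 := pow_le_one₀ hz0 hz1
    have hzk0 : 0 ≤ z ^ k := pow_nonneg hz0 k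
    push_cast
    nlinarith [pow_succ z k, mul_le_mul_of_nonneg_right hzk (sub_nonneg.2 hz1)]

theorem prob_diff_bound (n s k : ℕ) (hs : 1 ≤ s) (hns : s < n) :
    (1 - (s : ℝ) / n) ^ k - (1 - (s : ℝ) / ((n : ℝ) - 1)) ^ k
      ≤ (1 - (s : ℝ) / n) ^ k * ((k : ℝ) * s / (((n : ℝ) - 1) * ((n : ℝ) - (s : ℝ)))) := by
  have hS : (1 : ℝ) ≤ (s : ℝ) := by exact_mod_cast hs
  have hSN : (s : ℝ) + 1 ≤ (n : ℝ) := by exact_mod_cast hns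
  have hN2 : (2 : ℝ) ≤ (n : ℝ) := by linarith
  have hN0 : (n : ℝ) ≠ 0 := by linarith
  have hN1 : (n : ℝ) - 1 ≠ 0 := by linarith
  have hNS : (0 : ℝ) < (n : ℝ) - s := by linarith
  set a : ℝ := 1 - (s : ℝ) / n with ha
  set b : ℝ := 1 - (s : ℝ) / ((n : ℝ) - 1) with hb
  have haPos : 0 < a := by
    rw [ha]
    rw [sub_pos, div_lt_one (by linarith : (0:ℝ) < n)]
    linarith
  have hb0 : 0 ≤ b := by
    rw [hb, sub_nonneg, div_le_one (by linarith : (0:ℝ) < (n:ℝ) - 1)]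
    linarith
  have hba : b ≤ a := by
    rw [ha, hb]
    have : (s : ℝ) / n ≤ (s : ℝ) / ((n : ℝ) - 1) := by
      apply div_le_div_of_nonneg_left (by linarith) (by linarith) (by linarith)
    linarith
  set z : ℝ := b / a with hzdef
  have hz0 : 0 ≤ z := div_nonneg hb0 haPos.le
  have hz1 : z ≤ 1 := by
    rw [hzdef, div_le_one haPos]; exact hba
  have hbz : b = a * z := by
    rw [hzdef, mul_div_cancel₀ _ haPos.ne']
  have key : (1 : ℝ) - z = (s : ℝ) / (((n : ℝ) - 1) * ((n : ℝ) - s)) := by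
    rw [hzdef, hb, ha]
    field_simp
    ring
  calc a ^ k - b ^ k = a ^ k * (1 - z ^ k) := by rw [hbz, mul_pow]; ring
    _ ≤ a ^ k * ((k : ℝ) * (1 - z)) := by
        apply mul_le_mul_of_nonneg_left (one_sub_pow_le_aux z hz0 hz1 k)
          (pow_nonneg haPos.le k)
    _ = a ^ k * ((k : ℝ) * s / (((n : ℝ) - 1) * ((n : ℝ) - s))) := by
        rw [key]; ring
end

section
/- There exists N ∈ ℕ such that for all n ≥ N and all natural k with k ≤ (n/s)(log n + x + 1), one has (1-s/n)^k + (n-1)·((1-s/n)^k - (1-s/(n-1))^k) ≤ (1-s/n)^k · (1 + 2·k·s/(n-s)). -/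
lemma my_pow_sub_pow_le {a b : ℝ} (hb : 0 ≤ b) (hab : b ≤ a) (k : ℕ) :
    a ^ k - b ^ k ≤ k * a ^ (k - 1) * (a - b) := by
  induction k with
  | zero => simp
  | succ n ih =>
    have ha : 0 ≤ a := hb.trans hab
    have hbn : b ^ n ≤ a ^ n := pow_le_pow_left₀ hb hab n
    have h1 : a ^ (n+1) - b ^ (n+1) = a * (a^n - b^n) + (a - b) * b^n := by ring
    have h2 : a * (a^n - b^n) ≤ a * (n * a^(n-1) * (a-b)) := by
      exact mul_le_mul_of_nonneg_left ih ha
    have h3 : (a - b) * b^n ≤ (a - b) * a^n :=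
      mul_le_mul_of_nonneg_left hbn (by linarith)
    have h4 : a * (n * a^(n-1) * (a-b)) + (a - b) * a^n
        = (↑(n+1)) * a ^ n * (a - b) := by
      cases n with
      | zero => simp
      | succ m =>
        rw [Nat.add_sub_cancel, pow_succ]
        push_cast
        ring
    simp only [Nat.add_sub_cancel]
    linarith

theorem poisson_error_term_bound (s : ℕ) (hs : 1 ≤ s) (x : ℝ) :
    ∃ N : ℕ, ∀ n : ℕ, N ≤ n → ∀ k : ℕ,
      (k : ℝ) ≤ ((n : ℝ) / s) * (Real.log n + x + 1) →
      (1 - (s : ℝ) / n) ^ k +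
        ((n : ℝ) - 1) * ((1 - (s : ℝ) / n) ^ k - (1 - (s : ℝ) / ((n : ℝ) - 1)) ^ k)
      ≤ (1 - (s : ℝ) / n) ^ k * (1 + 2 * k * s / ((n : ℝ) - (s : ℝ))) := by
  refine ⟨s + 2, fun n hn k _ => ?_⟩
  have hs1 : (1:ℝ) ≤ (s:ℝ) := by exact_mod_cast hs
  have hsn : (s:ℝ) + 2 ≤ (n:ℝ) := by exact_mod_cast hn
  have hnpos : (0:ℝ) < n := by linarith
  have hn1pos : (0:ℝ) < (n:ℝ) - 1 := by linarith
  have hns : (0:ℝ) < (n:ℝ) - s := by linarith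
  set a : ℝ := 1 - (s:ℝ)/n with ha_def
  set b : ℝ := 1 - (s:ℝ)/((n:ℝ)-1) with hb_def
  have ha0 : 0 ≤ a := by
    rw [ha_def, sub_nonneg, div_le_one hnpos]; linarith
  have hb0 : 0 ≤ b := by
    rw [hb_def, sub_nonneg, div_le_one hn1pos]; linarith
  have hab : b ≤ a := by
    rw [ha_def, hb_def]
    have : (s:ℝ)/n ≤ (s:ℝ)/((n:ℝ)-1) :=
      div_le_div_of_nonneg_left (by linarith) hn1pos (by linarith)
    linarith
  have hdiff : a - b = (s:ℝ) / (n * ((n:ℝ)-1)) := by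
    rw [ha_def, hb_def]; field_simp; ring
  have key : ((n:ℝ)-1) * (a ^ k - b ^ k) ≤ a ^ k * (2 * k * s / ((n:ℝ) - s)) := by
    cases k with
    | zero => simp
    | succ m =>
      have hl := my_pow_sub_pow_le hb0 hab (m+1)
      rw [hdiff] at hl
      simp only [Nat.add_sub_cancel] at hl
      have ham : 0 ≤ a ^ m := pow_nonneg ha0 m
      have hak : a ^ (m+1) = a ^ m * a := pow_succ a m
      have haval : a = ((n:ℝ) - s) / n := by rw [ha_def]; field_simp
      have h5 : ((n:ℝ)-1) * (a ^ (m+1) - b ^ (m+1))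
          ≤ ((n:ℝ)-1) * ((↑(m+1)) * a ^ m * ((s:ℝ) / (n * ((n:ℝ)-1)))) :=
        mul_le_mul_of_nonneg_left hl (by linarith)
      have h6 : ((n:ℝ)-1) * ((↑(m+1)) * a ^ m * ((s:ℝ) / (n * ((n:ℝ)-1))))
          = (↑(m+1)) * a ^ m * (s:ℝ) / n := by
        field_simp
      have h7 : a ^ (m+1) * (2 * (↑(m+1)) * s / ((n:ℝ) - s))
          = 2 * ((↑(m+1)) * a ^ m * (s:ℝ) / n) := by
        rw [hak, haval]; field_simp
      have h8 : 0 ≤ (↑(m+1)) * a ^ m * (s:ℝ) / n := by positivity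
      push_cast at h5 h6 h7 h8 ⊢
      linarith
  nlinarith [key, pow_nonneg ha0 k]
end

section
/- Let W be a Poisson random variable with parameter λ > 0 and X a random variable on {0,1,…,n}. If there is a coupling (X, X^s) with X^s having the X-size-biased distribution such that X + 1 − X^s ≥ 0 almost surely and λ = E[X], then d_TV(X, W) ≤ min{1, λ}·E[X + 1 − X^s]. -/
open MeasureTheory ProbabilityTheory

open scoped Classical


noncomputable def pp (lam : ℝ) (i : ℕ) : ℝ := Real.exp (-lam) * lam ^ i / (i.factorial : ℝ)

noncomputable def FF (lam : ℝ) (k : ℕ) : ℝ := ∑ i ∈ Finset.range (k + 1), pp lam i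

noncomputable def pA (lam : ℝ) (A : Set ℕ) : ℝ := ∑' j, Set.indicator A (pp lam) j

noncomputable def fA (lam : ℝ) (A : Set ℕ) : ℕ → ℝ
  | 0 => 0
  | (k + 1) => Real.exp lam * (k.factorial : ℝ) / lam ^ (k + 1) *
      ((∑ j ∈ Finset.range (k + 1), Set.indicator A (pp lam) j) - pA lam A * FF lam k)

lemma pp_pos {lam : ℝ} (hl : 0 < lam) (i : ℕ) : 0 < pp lam i := by
  unfold pp
  positivity

lemma pp_hasSum {lam : ℝ} : HasSum (pp lam) 1 := by
  unfold pp
  apply (hasSum_mul_left_iff (Real.exp_ne_zero lam)).mp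
  simp only [mul_one]
  have : (fun i ↦ Real.exp lam * (Real.exp (-lam) * lam ^ i / (Nat.factorial i : ℝ))) =
      fun i ↦ lam ^ i / (Nat.factorial i : ℝ) := by
    ext n
    rw [mul_div_assoc, Real.exp_neg, ← mul_assoc, ← div_eq_mul_inv,
      div_self (Real.exp_ne_zero lam), one_mul]
  rw [this, Real.exp_eq_exp_ℝ]
  exact NormedSpace.expSeries_div_hasSum_exp lam

lemma pp_summable {lam : ℝ} : Summable (pp lam) := pp_hasSum.summable

lemma pp_tsum {lam : ℝ} : ∑' i, pp lam i = 1 := pp_hasSum.tsum_eq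

lemma pp_succ {lam : ℝ} (i : ℕ) : lam * pp lam i = ((i : ℝ) + 1) * pp lam (i + 1) := by
  unfold pp
  rw [Nat.factorial_succ]
  push_cast
  field_simp
  ring

lemma exp_fac {lam : ℝ} (hl : 0 < lam) (k : ℕ) :
    Real.exp lam * (k.factorial : ℝ) / lam ^ k * pp lam k = 1 := by
  unfold pp
  rw [Real.exp_neg]
  have h1 : (0:ℝ) < Real.exp lam := Real.exp_pos lam
  have h2 : (0:ℝ) < (k.factorial : ℝ) := by exact_mod_cast k.factorial_pos
  have h3 : (0:ℝ) < lam ^ k := pow_pos hl k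
  field_simp

lemma FF_pos {lam : ℝ} (hl : 0 < lam) (k : ℕ) : 0 < FF lam k :=
  Finset.sum_pos (fun i _ => pp_pos hl i) (by simp)

lemma FF_le_one {lam : ℝ} (hl : 0 < lam) (k : ℕ) : FF lam k ≤ 1 :=
  sum_le_hasSum _ (fun i _ => (pp_pos hl i).le) pp_hasSum

lemma tail_eq {lam : ℝ} (k : ℕ) : 1 - FF lam k = ∑' i, pp lam (i + (k + 1)) := by
  have h := Summable.sum_add_tsum_nat_add (f := pp lam) (k + 1) pp_summable
  rw [pp_tsum] at h
  unfold FF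
  linarith

lemma tail_summable {lam : ℝ} (k : ℕ) : Summable (fun i => pp lam (i + k)) :=
  (summable_nat_add_iff k).2 pp_summable

/-- lam * FF (m) ≤ (m+1) * FF (m+1) -/
lemma lam_FF_le {lam : ℝ} (hl : 0 < lam) (m : ℕ) :
    lam * FF lam m ≤ ((m : ℝ) + 1) * FF lam (m + 1) := by
  unfold FF
  rw [Finset.mul_sum, Finset.mul_sum]
  have h1 : ∀ i ∈ Finset.range (m + 1), lam * pp lam i ≤ ((m:ℝ)+1) * pp lam (i+1) := by
    intro i hi
    rw [pp_succ]
    have : ((i:ℝ) + 1) ≤ (m:ℝ) + 1 := by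
      have := Finset.mem_range.mp hi
      have : (i:ℝ) ≤ m := by exact_mod_cast Nat.lt_succ_iff.mp this
      linarith
    exact mul_le_mul_of_nonneg_right this (pp_pos hl _).le
  calc ∑ i ∈ Finset.range (m+1), lam * pp lam i
      ≤ ∑ i ∈ Finset.range (m+1), ((m:ℝ)+1) * pp lam (i+1) := Finset.sum_le_sum h1
    _ = ∑ i ∈ Finset.Ico 1 (m+2), ((m:ℝ)+1) * pp lam i := by
        rw [Finset.sum_Ico_eq_sum_range]
        simp [add_comm]
    _ ≤ ∑ i ∈ Finset.range (m+2), ((m:ℝ)+1) * pp lam i := by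
        apply Finset.sum_le_sum_of_subset_of_nonneg
        · intro x hx
          simp only [Finset.mem_Ico] at hx
          exact Finset.mem_range.mpr hx.2
        · intro i _ _
          exact mul_nonneg (by positivity) (pp_pos hl _).le

/-- (m+2) * (1 - FF (m+1)) ≤ lam * (1 - FF m) -/
lemma tail_ineq {lam : ℝ} (hl : 0 < lam) (m : ℕ) :
    ((m : ℝ) + 2) * (1 - FF lam (m + 1)) ≤ lam * (1 - FF lam m) := by
  rw [tail_eq, tail_eq]
  rw [← tsum_mul_left, ← tsum_mul_left]
  apply Summable.tsum_le_tsum _ ((tail_summable (m+2)).mul_left _) ((tail_summable (m+1)).mul_left _)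
  intro i
  have key : lam * pp lam (i + (m+1)) = ((i:ℝ) + (m:ℝ) + 2) * pp lam (i + (m+2)) := by
    have := pp_succ (lam := lam) (i + (m+1))
    rw [this]
    push_cast
    ring_nf
  rw [key]
  apply mul_le_mul_of_nonneg_right _ (pp_pos hl _).le
  linarith

lemma fA_succ_mul {lam : ℝ} (hl : 0 < lam) (A : Set ℕ) (k : ℕ) :
    lam * fA lam A (k + 1) = Real.exp lam * (k.factorial : ℝ) / lam ^ k *
      ((∑ j ∈ Finset.range (k + 1), Set.indicator A (pp lam) j) - pA lam A * FF lam k) := by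
  simp only [fA]
  have hlk : lam ^ k ≠ 0 := (pow_pos hl k).ne'
  have : lam ^ (k+1) = lam ^ k * lam := by ring
  rw [this]
  field_simp

/-- Stein equation -/
lemma stein_eq {lam : ℝ} (hl : 0 < lam) (A : Set ℕ) (k : ℕ) :
    lam * fA lam A (k + 1) - (k : ℝ) * fA lam A k
      = (if k ∈ A then (1:ℝ) else 0) - pA lam A := by
  match k with
  | 0 =>
    simp only [Nat.cast_zero, zero_mul, sub_zero]
    rw [fA_succ_mul hl]
    have h0 : ∑ j ∈ Finset.range 1, Set.indicator A (pp lam) j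
        = (if 0 ∈ A then (1:ℝ) else 0) * pp lam 0 := by
      by_cases h : 0 ∈ A <;> simp [Set.indicator, h]
    have hFF : FF lam 0 = pp lam 0 := by simp [FF]
    have key := exp_fac hl 0
    rw [h0, hFF]
    calc Real.exp lam * (Nat.factorial 0 : ℝ) / lam ^ 0 *
          ((if 0 ∈ A then (1:ℝ) else 0) * pp lam 0 - pA lam A * pp lam 0)
        = (Real.exp lam * (Nat.factorial 0 : ℝ) / lam ^ 0 * pp lam 0) *
            ((if 0 ∈ A then (1:ℝ) else 0) - pA lam A) := by ring
      _ = (if 0 ∈ A then (1:ℝ) else 0) - pA lam A := by rw [key, one_mul]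
  | (m + 1) =>
    rw [fA_succ_mul hl]
    have hm1 : ((m + 1 : ℕ) : ℝ) * fA lam A (m + 1)
        = Real.exp lam * ((m+1).factorial : ℝ) / lam ^ (m+1) *
          ((∑ j ∈ Finset.range (m + 1), Set.indicator A (pp lam) j) - pA lam A * FF lam m) := by
      simp only [fA]
      have : ((m+1).factorial : ℝ) = ((m:ℝ)+1) * (m.factorial : ℝ) := by
        rw [Nat.factorial_succ]; push_cast; ring
      rw [this]
      push_cast
      ring
    rw [hm1]
    have hr : ∑ j ∈ Finset.range (m + 2), Set.indicator A (pp lam) j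
        = ∑ j ∈ Finset.range (m + 1), Set.indicator A (pp lam) j
          + (if m + 1 ∈ A then (1:ℝ) else 0) * pp lam (m+1) := by
      rw [Finset.sum_range_succ]
      by_cases h : m + 1 ∈ A <;> simp [Set.indicator, h]
    have hFr : FF lam (m + 1) = FF lam m + pp lam (m+1) := by
      unfold FF; rw [Finset.sum_range_succ]
    rw [hr, hFr]
    have key := exp_fac hl (m+1)
    calc Real.exp lam * ((m+1).factorial : ℝ) / lam ^ (m+1) *
            ((∑ j ∈ Finset.range (m + 1), Set.indicator A (pp lam) j
              + (if m + 1 ∈ A then (1:ℝ) else 0) * pp lam (m+1))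
              - pA lam A * (FF lam m + pp lam (m+1)))
          - Real.exp lam * ((m+1).factorial : ℝ) / lam ^ (m+1) *
            ((∑ j ∈ Finset.range (m + 1), Set.indicator A (pp lam) j) - pA lam A * FF lam m)
        = (Real.exp lam * ((m+1).factorial : ℝ) / lam ^ (m+1) * pp lam (m+1)) *
            ((if m + 1 ∈ A then (1:ℝ) else 0) - pA lam A) := by ring
      _ = (if m + 1 ∈ A then (1:ℝ) else 0) - pA lam A := by rw [key, one_mul]

lemma pA_single {lam : ℝ} (j : ℕ) : pA lam {j} = pp lam j := by
  unfold pA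
  have h : ∀ i, Set.indicator {j} (pp lam) i = if i = j then pp lam j else 0 := by
    intro i
    by_cases h : i = j <;> simp [Set.indicator, h]
  simp_rw [h]
  exact tsum_ite_eq j (fun _ => pp lam j)

lemma pA_univ {lam : ℝ} : pA lam Set.univ = 1 := by
  unfold pA; simp [pp_tsum]

lemma pA_nonneg {lam : ℝ} (hl : 0 < lam) (A : Set ℕ) : 0 ≤ pA lam A :=
  tsum_nonneg (fun j => Set.indicator_nonneg (fun i _ => (pp_pos hl i).le) j)

lemma pA_le_one {lam : ℝ} (hl : 0 < lam) (A : Set ℕ) : pA lam A ≤ 1 := by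
  rw [← pp_tsum (lam := lam)]
  apply Summable.tsum_le_tsum _ (pp_summable.indicator A) pp_summable
  intro j
  exact Set.indicator_le_self' (fun i _ => (pp_pos hl i).le) j

lemma fA_single {lam : ℝ} (j k : ℕ) :
    fA lam {j} (k + 1) = Real.exp lam * (k.factorial : ℝ) / lam ^ (k + 1) *
      ((if j ≤ k then pp lam j else 0) - pp lam j * FF lam k) := by
  simp only [fA, pA_single]
  congr 1
  congr 1
  have h : ∀ i, Set.indicator {j} (pp lam) i = if i = j then pp lam j else 0 := by
    intro i; by_cases h : i = j <;> simp [Set.indicator, h]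
  simp_rw [h]
  rw [Finset.sum_ite_eq' (Finset.range (k+1)) j fun _ => pp lam j]
  simp [Nat.lt_succ_iff]

lemma summable_fA_single {lam : ℝ} (hl : 0 < lam) (A : Set ℕ) (K : ℕ) :
    Summable (fun j => Set.indicator A (fun j => fA lam {j} K) j) := by
  match K with
  | 0 => simp only [fA]; simp [summable_zero]
  | (k+1) =>
    have : (fun j => Set.indicator A (fun j => fA lam {j} (k+1)) j)
        = fun j => Real.exp lam * (k.factorial : ℝ) / lam ^ (k + 1) *
            (Set.indicator A (fun j => if j ≤ k then pp lam j else 0) j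
              - Set.indicator A (pp lam) j * FF lam k) := by
      funext j
      by_cases h : j ∈ A
      · simp only [Set.indicator_of_mem h, fA_single]
      · simp [Set.indicator_of_notMem h]
    rw [this]
    apply Summable.mul_left
    apply Summable.sub
    · apply Summable.of_nonneg_of_le
        (fun j => Set.indicator_nonneg (fun i _ => by split <;> simp [(pp_pos hl i).le]) j)
        (fun j => ?_) (pp_summable (lam := lam))
      by_cases h : j ∈ A
      · simp only [Set.indicator_of_mem h]
        split
        · exact le_refl _
        · exact (pp_pos hl j).le
      · simp [Set.indicator_of_notMem h, (pp_pos hl j).le]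
    · exact (pp_summable.indicator A).mul_right _

lemma fA_eq_tsum {lam : ℝ} (hl : 0 < lam) (A : Set ℕ) (K : ℕ) :
    fA lam A K = ∑' j, Set.indicator A (fun j => fA lam {j} K) j := by
  match K with
  | 0 => simp only [fA]; simp
  | (k+1) =>
    have h1 : (fun j => Set.indicator A (fun j => fA lam {j} (k+1)) j)
        = fun j => Real.exp lam * (k.factorial : ℝ) / lam ^ (k + 1) *
            (Set.indicator A (fun j => if j ≤ k then pp lam j else 0) j
              - Set.indicator A (pp lam) j * FF lam k) := by
      funext j
      by_cases h : j ∈ A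
      · simp only [Set.indicator_of_mem h, fA_single]
      · simp [Set.indicator_of_notMem h]
    rw [h1, tsum_mul_left]
    have hs1 : Summable (fun j => Set.indicator A (fun j => if j ≤ k then pp lam j else 0) j) := by
      apply Summable.of_nonneg_of_le
        (fun j => Set.indicator_nonneg (fun i _ => by split <;> simp [(pp_pos hl i).le]) j)
        (fun j => ?_) (pp_summable (lam := lam))
      by_cases h : j ∈ A
      · simp only [Set.indicator_of_mem h]
        split
        · exact le_refl _
        · exact (pp_pos hl j).le
      · simp [Set.indicator_of_notMem h, (pp_pos hl j).le]
    have hs2 : Summable (fun j => Set.indicator A (pp lam) j * FF lam k) :=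
      (pp_summable.indicator A).mul_right _
    rw [Summable.tsum_sub hs1 hs2, tsum_mul_right]
    have h2 : ∑' j, Set.indicator A (fun j => if j ≤ k then pp lam j else 0) j
        = ∑ j ∈ Finset.range (k+1), Set.indicator A (pp lam) j := by
      rw [tsum_eq_sum (s := Finset.range (k+1))]
      · apply Finset.sum_congr rfl
        intro j hj
        have hj' : j ≤ k := Nat.lt_succ_iff.mp (Finset.mem_range.mp hj)
        by_cases h : j ∈ A
        · simp [Set.indicator_of_mem h, hj']
        · simp [Set.indicator_of_notMem h]
      · intro j hj
        have hj' : ¬ j ≤ k := by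
          simpa [Nat.lt_succ_iff] using hj
        by_cases h : j ∈ A
        · simp [Set.indicator_of_mem h, hj']
        · simp [Set.indicator_of_notMem h]
    rw [h2]
    simp only [fA, pA]

lemma fA_univ {lam : ℝ} (k : ℕ) : fA lam Set.univ k = 0 := by
  match k with
  | 0 => simp [fA]
  | (m+1) =>
    simp only [fA, pA_univ, Set.indicator_univ, one_mul]
    unfold FF
    simp

lemma min_nonneg' {lam : ℝ} (hl : 0 < lam) : 0 ≤ min 1 (1/lam) :=
  le_min (by norm_num) (by positivity)

lemma d_single_nonpos {lam : ℝ} (hl : 0 < lam) {j k : ℕ} (hjk : j ≠ k) :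
    fA lam {j} (k + 1) - fA lam {j} k ≤ 0 := by
  match k with
  | 0 =>
    rw [fA_single]
    simp only [fA, sub_zero]
    have hj0 : ¬ j ≤ 0 := by omega
    rw [if_neg hj0]
    have h1 : (0:ℝ) < Real.exp lam * (Nat.factorial 0 : ℝ) / lam ^ (0+1) := by positivity
    have h2 : (0:ℝ) < pp lam j * FF lam 0 := mul_pos (pp_pos hl j) (FF_pos hl 0)
    nlinarith
  | (m + 1) =>
    rw [fA_single, fA_single]
    set a : ℝ := Real.exp lam * (m.factorial : ℝ) / lam ^ (m+2) with ha_def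
    have ha : 0 < a := by positivity
    have hC1 : Real.exp lam * (m.factorial : ℝ) / lam ^ (m+1) = a * lam := by
      rw [ha_def]
      have : lam ^ (m+2) = lam ^ (m+1) * lam := by ring
      rw [this]
      field_simp
    have hC2 : Real.exp lam * ((m+1).factorial : ℝ) / lam ^ (m+1+1) = a * ((m:ℝ)+1) := by
      rw [ha_def]
      have hf : ((m+1).factorial : ℝ) = ((m:ℝ)+1) * (m.factorial : ℝ) := by
        rw [Nat.factorial_succ]; push_cast; ring
      rw [hf]
      ring
    rw [hC2, hC1]
    have hFle := lam_FF_le hl m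
    have htail := tail_ineq hl m
    have hppj := pp_pos hl j
    have hF1le := FF_le_one hl (m+1)
    rcases Nat.lt_or_ge j (m+1) with hj | hj
    · -- j ≤ m : both indicators are pp j
      have h1 : j ≤ m + 1 := by omega
      have h2 : j ≤ m := by omega
      rw [if_pos h1, if_pos h2]
      have key : ((m:ℝ)+1) * (1 - FF lam (m+1)) ≤ lam * (1 - FF lam m) := by
        have : ((m:ℝ)+1) * (1 - FF lam (m+1)) ≤ ((m:ℝ)+2) * (1 - FF lam (m+1)) := by
          nlinarith
        linarith
      nlinarith [mul_le_mul_of_nonneg_left key (mul_pos ha hppj).le]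
    · -- j ≥ m+1, and j ≠ m+1, so j > m+1 : both indicators 0
      have h1 : ¬ j ≤ m + 1 := by omega
      have h2 : ¬ j ≤ m := by omega
      rw [if_neg h1, if_neg h2]
      nlinarith [mul_le_mul_of_nonneg_left hFle (mul_pos ha hppj).le]

lemma d_diag_eq {lam : ℝ} (hl : 0 < lam) (m : ℕ) :
    fA lam {m+1} (m + 2) - fA lam {m+1} (m+1)
      = (1 - FF lam (m+1)) / lam + FF lam m / ((m:ℝ)+1) := by
  rw [fA_single, fA_single]
  have key := exp_fac hl (m+1)
  have h1 : m + 1 ≤ m + 1 := le_refl _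
  have h2 : ¬ m + 1 ≤ m := by omega
  rw [if_pos h1, if_neg h2]
  have hC2 : Real.exp lam * ((m+1).factorial : ℝ) / lam ^ (m+1+1) * pp lam (m+1)
      = 1 / lam := by
    have step : Real.exp lam * ((m+1).factorial : ℝ) / lam ^ (m+1+1) * pp lam (m+1)
        = (Real.exp lam * ((m+1).factorial : ℝ) / lam ^ (m+1) * pp lam (m+1)) / lam := by
      have hp : lam ^ (m+1+1) = lam ^ (m+1) * lam := by ring
      rw [hp]
      ring
    rw [step, key]
  have hC1 : Real.exp lam * (m.factorial : ℝ) / lam ^ (m+1) * pp lam (m+1)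
      = 1 / ((m:ℝ)+1) := by
    have hf : ((m+1).factorial : ℝ) = ((m:ℝ)+1) * (m.factorial : ℝ) := by
      rw [Nat.factorial_succ]; push_cast; ring
    have hm1 : (0:ℝ) < (m:ℝ)+1 := by positivity
    rw [hf] at key
    rw [eq_div_iff hm1.ne']
    calc Real.exp lam * (m.factorial : ℝ) / lam ^ (m+1) * pp lam (m+1) * ((m:ℝ)+1)
        = Real.exp lam * (((m:ℝ)+1) * (m.factorial : ℝ)) / lam ^ (m+1) * pp lam (m+1) := by
          ring
      _ = 1 := key
  calc Real.exp lam * ((m+1).factorial : ℝ) / lam ^ (m+1+1) *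
          (pp lam (m+1) - pp lam (m+1) * FF lam (m+1))
        - Real.exp lam * (m.factorial : ℝ) / lam ^ (m+1) *
          ((0:ℝ) - pp lam (m+1) * FF lam m)
      = (Real.exp lam * ((m+1).factorial : ℝ) / lam ^ (m+1+1) * pp lam (m+1))
          * (1 - FF lam (m+1))
        + (Real.exp lam * (m.factorial : ℝ) / lam ^ (m+1) * pp lam (m+1)) * FF lam m := by
        ring
    _ = (1 - FF lam (m+1)) / lam + FF lam m / ((m:ℝ)+1) := by
        rw [hC2, hC1]; ring

lemma d_diag_zero_eq {lam : ℝ} (hl : 0 < lam) :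
    fA lam {0} 1 - fA lam {0} 0 = (1 - pp lam 0) / lam := by
  rw [fA_single]
  simp only [fA, sub_zero]
  have hFF : FF lam 0 = pp lam 0 := by simp [FF]
  rw [if_pos (le_refl 0), hFF]
  have key := exp_fac hl 0
  calc Real.exp lam * (Nat.factorial 0 : ℝ) / lam ^ (0+1) * (pp lam 0 - pp lam 0 * pp lam 0)
      = (Real.exp lam * (Nat.factorial 0 : ℝ) / lam ^ 0 * pp lam 0) * ((1 - pp lam 0) / lam) := by
        have : lam ^ (0+1) = lam ^ 0 * lam := by ring
        rw [this]
        field_simp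
    _ = (1 - pp lam 0) / lam := by rw [key, one_mul]

lemma d_diag_nonneg {lam : ℝ} (hl : 0 < lam) (k : ℕ) :
    0 ≤ fA lam {k} (k + 1) - fA lam {k} k := by
  match k with
  | 0 =>
    rw [d_diag_zero_eq hl]
    have h1 : pp lam 0 ≤ 1 := by
      have := FF_le_one hl 0
      simp [FF] at this
      exact this
    exact div_nonneg (by linarith) hl.le
  | (m+1) =>
    rw [d_diag_eq hl]
    have h1 := FF_le_one hl (m+1)
    have h2 := (FF_pos hl m).le
    have hm1 : (0:ℝ) < (m:ℝ)+1 := by positivity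
    exact add_nonneg (div_nonneg (by linarith) hl.le) (div_nonneg h2 hm1.le)

lemma d_diag_le {lam : ℝ} (hl : 0 < lam) (k : ℕ) :
    fA lam {k} (k + 1) - fA lam {k} k ≤ min 1 (1/lam) := by
  rw [le_min_iff]
  match k with
  | 0 =>
    rw [d_diag_zero_eq hl]
    have hp0 : pp lam 0 = Real.exp (-lam) := by simp [pp]
    have hp0' : 0 < pp lam 0 := pp_pos hl 0
    constructor
    · rw [div_le_one hl, hp0]
      have := Real.add_one_le_exp (-lam)
      linarith
    · rw [div_le_div_iff₀ hl hl]
      nlinarith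
  | (m+1) =>
    rw [d_diag_eq hl]
    have hm1 : (0:ℝ) < (m:ℝ)+1 := by positivity
    have hm2 : (0:ℝ) < (m:ℝ)+2 := by positivity
    have hF0n := (FF_pos hl m).le
    have hF0le := FF_le_one hl m
    have hF1le := FF_le_one hl (m+1)
    have hF1n := (FF_pos hl (m+1)).le
    constructor
    · have e1 : (1 - FF lam (m+1))/lam ≤ (1 - FF lam m)/((m:ℝ)+2) := by
        rw [div_le_div_iff₀ hl hm2]
        have := tail_ineq hl m
        nlinarith
      have e2 : (1 - FF lam m)/((m:ℝ)+2) ≤ (1 - FF lam m)/((m:ℝ)+1) := by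
        gcongr
        · linarith
      have e3 : (1 - FF lam m)/((m:ℝ)+1) + FF lam m/((m:ℝ)+1) = 1/((m:ℝ)+1) := by
        field_simp
        ring
      have e4 : (1:ℝ)/((m:ℝ)+1) ≤ 1 := by
        rw [div_le_one hm1]; linarith
      linarith
    · have e1 : FF lam m/((m:ℝ)+1) ≤ FF lam (m+1)/lam := by
        rw [div_le_div_iff₀ hm1 hl]
        have := lam_FF_le hl m
        nlinarith
      have e2 : (1 - FF lam (m+1))/lam + FF lam (m+1)/lam = 1/lam := by
        field_simp
        ring
      linarith

lemma summable_d {lam : ℝ} (hl : 0 < lam) (A : Set ℕ) (k : ℕ) :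
    Summable (fun j => Set.indicator A (fun j => fA lam {j} (k+1) - fA lam {j} k) j) := by
  have h : (fun j => Set.indicator A (fun j => fA lam {j} (k+1) - fA lam {j} k) j)
      = fun j => Set.indicator A (fun j => fA lam {j} (k+1)) j
          - Set.indicator A (fun j => fA lam {j} k) j := by
    funext j
    by_cases h : j ∈ A <;> simp [Set.indicator_of_mem, Set.indicator_of_notMem, h]
  rw [h]
  exact (summable_fA_single hl A (k+1)).sub (summable_fA_single hl A k)

lemma d_rep {lam : ℝ} (hl : 0 < lam) (A : Set ℕ) (k : ℕ) :
    fA lam A (k+1) - fA lam A k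
      = ∑' j, Set.indicator A (fun j => fA lam {j} (k+1) - fA lam {j} k) j := by
  rw [fA_eq_tsum hl A (k+1), fA_eq_tsum hl A k,
    ← Summable.tsum_sub (summable_fA_single hl A (k+1)) (summable_fA_single hl A k)]
  congr 1
  funext j
  by_cases h : j ∈ A <;> simp [Set.indicator_of_mem, Set.indicator_of_notMem, h]

lemma d_total_zero {lam : ℝ} (hl : 0 < lam) (k : ℕ) :
    ∑' j, (fA lam {j} (k+1) - fA lam {j} k) = 0 := by
  have h := d_rep hl Set.univ k
  simp only [Set.indicator_univ, fA_univ] at h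
  simpa using h.symm

lemma summable_d' {lam : ℝ} (hl : 0 < lam) (k : ℕ) :
    Summable (fun j => fA lam {j} (k+1) - fA lam {j} k) := by
  have := summable_d hl Set.univ k
  simpa [Set.indicator_univ] using this

/-- The crucial uniform bound on increments of the Stein solution. -/
lemma incr_bound {lam : ℝ} (hl : 0 < lam) (A : Set ℕ) (k : ℕ) :
    |fA lam A (k+1) - fA lam A k| ≤ min 1 (1/lam) := by
  set d : ℕ → ℝ := fun j => fA lam {j} (k+1) - fA lam {j} k with hd
  have hrep := d_rep hl A k
  rw [← hd] at hrep
  have hupper : fA lam A (k+1) - fA lam A k ≤ min 1 (1/lam) := by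
    rw [hrep]
    have h1 : ∑' j, Set.indicator A d j ≤ ∑' j, (if j = k then max (d k) 0 else 0) := by
      apply Summable.tsum_le_tsum _ (summable_d hl A k)
      · exact (hasSum_ite_eq k (max (d k) 0)).summable
      · intro j
        by_cases hjk : j = k
        · subst hjk
          rw [if_pos rfl]
          by_cases h : j ∈ A
          · rw [Set.indicator_of_mem h]
            exact le_max_left _ _
          · simp [Set.indicator_of_notMem h, le_max_right]
        · rw [if_neg hjk]
          by_cases h : j ∈ A
          · simp only [Set.indicator_of_mem h]
            exact d_single_nonpos hl hjk
          · simp [Set.indicator_of_notMem h]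
    rw [tsum_ite_eq k (fun _ => max (d k) 0)] at h1
    have h2 : max (d k) 0 ≤ min 1 (1/lam) :=
      max_le (d_diag_le hl k) (min_nonneg' hl)
    linarith
  have hlower : -(min 1 (1/lam)) ≤ fA lam A (k+1) - fA lam A k := by
    rw [hrep]
    have h1 : ∑' j, (if j = k then 0 else d j) ≤ ∑' j, Set.indicator A d j := by
      apply Summable.tsum_le_tsum _ _ (summable_d hl A k)
      · intro j
        by_cases hjk : j = k
        · subst hjk
          rw [if_pos rfl]
          by_cases h : j ∈ A
          · simp only [Set.indicator_of_mem h]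
            exact d_diag_nonneg hl j
          · simp [Set.indicator_of_notMem h]
        · rw [if_neg hjk]
          by_cases h : j ∈ A
          · rw [Set.indicator_of_mem h]
          · simp only [Set.indicator_of_notMem h]
            exact d_single_nonpos hl hjk
      · have heq : (fun j => if j = k then (0:ℝ) else d j)
            = fun j => d j - (if j = k then d k else 0) := by
          funext j
          by_cases hjk : j = k
          · subst hjk; simp
          · simp [hjk]
        rw [heq]
        exact (summable_d' hl k).sub (hasSum_ite_eq k (d k)).summable
    have h2 : ∑' j, (if j = k then (0:ℝ) else d j) = - d k := by
      have h3 := Summable.tsum_eq_add_tsum_ite (summable_d' hl k) k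
      rw [d_total_zero hl k] at h3
      have h3' : (0:ℝ) = d k + ∑' j, (if j = k then 0 else d j) := h3
      linarith
    rw [h2] at h1
    have h4 : d k ≤ min 1 (1/lam) := d_diag_le hl k
    exact le_trans (neg_le_neg h4) h1
  rw [abs_le]
  exact ⟨hlower, hupper⟩

/-- Telescoping bound. -/
lemma fA_lipschitz {lam : ℝ} (hl : 0 < lam) (A : Set ℕ) (m M : ℕ) (h : m ≤ M) :
    |fA lam A M - fA lam A m| ≤ min 1 (1/lam) * ((M : ℝ) - (m : ℝ)) := by
  obtain ⟨t, rfl⟩ := Nat.exists_eq_add_of_le h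
  clear h
  induction t with
  | zero => simp
  | succ s ih =>
    have step := incr_bound hl A (m + s)
    have : fA lam A (m + (s+1)) - fA lam A m
        = (fA lam A ((m + s) + 1) - fA lam A (m + s)) + (fA lam A (m + s) - fA lam A m) := by
      have : m + (s + 1) = (m + s) + 1 := by ring
      rw [this]; ring
    rw [this]
    calc |fA lam A ((m + s) + 1) - fA lam A (m + s) + (fA lam A (m + s) - fA lam A m)|
        ≤ |fA lam A ((m + s) + 1) - fA lam A (m + s)| + |fA lam A (m + s) - fA lam A m| :=
          abs_add_le _ _
      _ ≤ min 1 (1/lam) + min 1 (1/lam) * ((↑(m + s) : ℝ) - (m : ℝ)) := by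
          exact add_le_add step ih
      _ = min 1 (1/lam) * ((↑(m + (s+1)) : ℝ) - (m : ℝ)) := by
          push_cast
          ring

section Prob

variable {Ω : Type*} [MeasureSpace Ω] [IsProbabilityMeasure (ℙ : Measure Ω)]

lemma rep_fun (Y : Ω → ℕ) (N : ℕ) (hYN : ∀ ω, Y ω < N) (g : ℕ → ℝ) :
    (fun ω => g (Y ω))
      = fun ω => ∑ y ∈ Finset.range N, Set.indicator (Y ⁻¹' {y}) (fun _ => g y) ω := by
  funext ω
  have hmem : Y ω ∈ Finset.range N := Finset.mem_range.mpr (hYN ω)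
  have : ∀ y, Set.indicator (Y ⁻¹' {y}) (fun _ => g y) ω = if y = Y ω then g y else 0 := by
    intro y
    by_cases h : Y ω = y
    · rw [if_pos h.symm]
      apply Set.indicator_of_mem
      simp [h]
    · rw [if_neg (Ne.symm h)]
      apply Set.indicator_of_notMem
      simp [h]
  simp_rw [this]
  rw [Finset.sum_ite_eq' (Finset.range N) (Y ω) (fun y => g y)]
  rw [if_pos hmem]

lemma integrable_comp (Y : Ω → ℕ) (hY : Measurable Y) (N : ℕ) (hYN : ∀ ω, Y ω < N)
    (g : ℕ → ℝ) : Integrable (fun ω => g (Y ω)) ℙ := by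
  rw [rep_fun Y N hYN g]
  apply integrable_finset_sum
  intro y _
  exact (integrable_const (g y)).indicator (hY (MeasurableSet.singleton y))

lemma integral_comp (Y : Ω → ℕ) (hY : Measurable Y) (N : ℕ) (hYN : ∀ ω, Y ω < N)
    (g : ℕ → ℝ) :
    ∫ ω, g (Y ω) = ∑ y ∈ Finset.range N, g y * (ℙ (Y ⁻¹' {y})).toReal := by
  rw [rep_fun Y N hYN g]
  rw [integral_finset_sum _ (fun y _ =>
    (integrable_const (g y)).indicator (hY (MeasurableSet.singleton y)))]
  apply Finset.sum_congr rfl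
  intro y _
  rw [integral_indicator_const (g y) (hY (MeasurableSet.singleton y))]
  rw [smul_eq_mul, mul_comm]
  rfl

lemma prob_mem_eq_integral (Y : Ω → ℕ) (hY : Measurable Y) (A : Set ℕ) :
    (ℙ (Y ⁻¹' A)).toReal = ∫ ω, (if Y ω ∈ A then (1:ℝ) else 0) := by
  have h1 : (fun ω => if Y ω ∈ A then (1:ℝ) else 0)
      = fun ω => Set.indicator (Y ⁻¹' A) (fun _ => (1:ℝ)) ω := by
    funext ω
    by_cases h : Y ω ∈ A
    · rw [if_pos h, Set.indicator_of_mem (by exact h)]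
    · rw [if_neg h, Set.indicator_of_notMem (by exact h)]
  rw [h1, integral_indicator_const (1:ℝ) (hY MeasurableSet.of_discrete), smul_eq_mul, mul_one]
  rfl

lemma poisson_prob (W : Ω → ℕ) (hW : Measurable W) (lam : ℝ)
    (hPoisson : ∀ m : ℕ,
      (ℙ (W ⁻¹' {m})).toReal = Real.exp (-lam) * lam ^ m / (m.factorial : ℝ))
    (A : Set ℕ) : (ℙ (W ⁻¹' A)).toReal = pA lam A := by
  have hA : W ⁻¹' A = ⋃ j ∈ A, W ⁻¹' {j} := by
    ext ω; simp
  rw [hA]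
  rw [measure_biUnion (Set.to_countable A) ?hd (fun j _ => hW (MeasurableSet.singleton j))]
  case hd =>
    intro i _ j _ hij
    apply Disjoint.preimage
    simp [Set.disjoint_singleton_left, hij]
  rw [ENNReal.tsum_toReal_eq (fun j => measure_ne_top ℙ _)]
  have : ∀ j : A, (ℙ (W ⁻¹' {(j : ℕ)})).toReal = pp lam (j : ℕ) := by
    intro j
    rw [hPoisson (j : ℕ)]
    rfl
  rw [tsum_congr this]
  rw [tsum_subtype A (pp lam)]
  rfl

end Prob

lemma lam_mul_min {lam : ℝ} (hl : 0 < lam) : lam * min 1 (1/lam) = min 1 lam := by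
  rcases le_total lam 1 with h | h
  · have h1 : (1:ℝ) ≤ 1/lam := by
      rw [le_div_iff₀ hl]; linarith
    rw [min_eq_left h1, min_eq_right h, mul_one]
  · have h1 : 1/lam ≤ (1:ℝ) := by
      rw [div_le_one hl]; linarith
    rw [min_eq_right h1, min_eq_left h]
    field_simp

theorem stein_chen_size_bias_bound
    {Ω : Type*} [MeasureSpace Ω] [IsProbabilityMeasure (ℙ : Measure Ω)]
    (n : ℕ) (X Xs W : Ω → ℕ)
    (hX : Measurable X) (hXs : Measurable Xs) (hW : Measurable W)
    (hXn : ∀ ω, X ω ≤ n) (hXsn : ∀ ω, Xs ω ≤ n)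
    (lam : ℝ) (hlam : lam = ∫ ω, (X ω : ℝ)) (hlam0 : 0 < lam)
    (hPoisson : ∀ m : ℕ,
      (ℙ (W ⁻¹' {m})).toReal = Real.exp (-lam) * lam ^ m / (m.factorial : ℝ))
    (hsb : ∀ y : ℕ, (ℙ (Xs ⁻¹' {y})).toReal = (y : ℝ) * (ℙ (X ⁻¹' {y})).toReal / lam)
    (hcoupling : ∀ᵐ ω ∂(ℙ : Measure Ω), Xs ω ≤ X ω + 1) :
    ∀ A : Set ℕ, |(ℙ (X ⁻¹' A)).toReal - (ℙ (W ⁻¹' A)).toReal|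
      ≤ min 1 lam * ∫ ω, ((X ω : ℝ) + 1 - (Xs ω : ℝ)) := by
  intro A
  have hXlt : ∀ ω, X ω < n + 1 := fun ω => Nat.lt_succ_of_le (hXn ω)
  have hXslt : ∀ ω, Xs ω < n + 1 := fun ω => Nat.lt_succ_of_le (hXsn ω)
  set c : ℝ := min 1 (1/lam) with hc
  -- probabilities
  have hPW : (ℙ (W ⁻¹' A)).toReal = pA lam A := poisson_prob W hW lam hPoisson A
  have hPX : (ℙ (X ⁻¹' A)).toReal = ∫ ω, (if X ω ∈ A then (1:ℝ) else 0) :=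
    prob_mem_eq_integral X hX A
  -- integrability
  have hI2 : Integrable (fun ω => fA lam A (X ω + 1)) ℙ :=
    integrable_comp X hX (n+1) hXlt (fun y => fA lam A (y+1))
  have hI3 : Integrable (fun ω => (X ω : ℝ) * fA lam A (X ω)) ℙ :=
    integrable_comp X hX (n+1) hXlt (fun y => (y:ℝ) * fA lam A y)
  have hI4 : Integrable (fun ω => fA lam A (Xs ω)) ℙ :=
    integrable_comp Xs hXs (n+1) hXslt (fun y => fA lam A y)
  have hI2' : Integrable (fun ω => lam * fA lam A (X ω + 1)) ℙ :=
    integrable_comp X hX (n+1) hXlt (fun y => lam * fA lam A (y+1))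
  -- Stein equation, integrated
  have hptw : (fun ω => (if X ω ∈ A then (1:ℝ) else 0))
      = fun ω => (lam * fA lam A (X ω + 1) - (X ω : ℝ) * fA lam A (X ω)) + pA lam A := by
    funext ω
    have := stein_eq hlam0 A (X ω)
    linarith
  have hI23 : Integrable (fun ω => lam * fA lam A (X ω + 1) - (X ω : ℝ) * fA lam A (X ω)) ℙ :=
    hI2'.sub hI3
  have hIeq : (ℙ (X ⁻¹' A)).toReal
      = (lam * (∫ ω, fA lam A (X ω + 1)) - ∫ ω, (X ω : ℝ) * fA lam A (X ω)) + pA lam A := by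
    rw [hPX, hptw]
    rw [integral_add hI23 (integrable_const (pA lam A)),
      integral_sub hI2' hI3, integral_const]
    simp only [probReal_univ, one_smul]
    rw [integral_const_mul]
  -- size biasing
  have hsize : ∫ ω, (X ω : ℝ) * fA lam A (X ω) = lam * ∫ ω, fA lam A (Xs ω) := by
    rw [integral_comp X hX (n+1) hXlt (fun y => (y:ℝ) * fA lam A y),
      integral_comp Xs hXs (n+1) hXslt (fun y => fA lam A y), Finset.mul_sum]
    apply Finset.sum_congr rfl
    intro y _
    have h := hsb y
    have : lam * (ℙ (Xs ⁻¹' {y})).toReal = (y : ℝ) * (ℙ (X ⁻¹' {y})).toReal := by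
      rw [h]
      field_simp
    calc (y:ℝ) * fA lam A y * (ℙ (X ⁻¹' {y})).toReal
        = fA lam A y * ((y:ℝ) * (ℙ (X ⁻¹' {y})).toReal) := by ring
      _ = fA lam A y * (lam * (ℙ (Xs ⁻¹' {y})).toReal) := by rw [this]
      _ = lam * (fA lam A y * (ℙ (Xs ⁻¹' {y})).toReal) := by ring
  -- main difference formula
  have e2 : ∫ ω, (fA lam A (X ω + 1) - fA lam A (Xs ω))
      = (∫ ω, fA lam A (X ω + 1)) - ∫ ω, fA lam A (Xs ω) := integral_sub hI2 hI4
  have hdiff : (ℙ (X ⁻¹' A)).toReal - (ℙ (W ⁻¹' A)).toReal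
      = lam * ∫ ω, (fA lam A (X ω + 1) - fA lam A (Xs ω)) := by
    rw [hIeq, hPW, hsize, e2]
    ring
  -- a.e. bound
  have habs : ∀ᵐ ω ∂(ℙ : Measure Ω),
      |fA lam A (X ω + 1) - fA lam A (Xs ω)| ≤ c * ((X ω : ℝ) + 1 - (Xs ω : ℝ)) := by
    filter_upwards [hcoupling] with ω hω
    have := fA_lipschitz hlam0 A (Xs ω) (X ω + 1) hω
    rw [hc]
    calc |fA lam A (X ω + 1) - fA lam A (Xs ω)|
        ≤ min 1 (1/lam) * ((↑(X ω + 1) : ℝ) - (Xs ω : ℝ)) := this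
      _ = min 1 (1/lam) * ((X ω : ℝ) + 1 - (Xs ω : ℝ)) := by push_cast; ring
  -- integrability of the bound
  have hIcb : Integrable (fun ω => c * ((X ω : ℝ) + 1 - (Xs ω : ℝ))) ℙ := by
    have h1 : Integrable (fun ω => ((X ω : ℝ) + 1)) ℙ :=
      integrable_comp X hX (n+1) hXlt (fun y => (y:ℝ) + 1)
    have h2 : Integrable (fun ω => ((Xs ω : ℝ))) ℙ :=
      integrable_comp Xs hXs (n+1) hXslt (fun y => (y:ℝ))
    exact ((h1.sub h2).const_mul c)
  -- bound the integral
  have hbound : |∫ ω, (fA lam A (X ω + 1) - fA lam A (Xs ω))|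
      ≤ c * ∫ ω, ((X ω : ℝ) + 1 - (Xs ω : ℝ)) := by
    calc |∫ ω, (fA lam A (X ω + 1) - fA lam A (Xs ω))|
        ≤ ∫ ω, |fA lam A (X ω + 1) - fA lam A (Xs ω)| := by
          simpa [Real.norm_eq_abs] using
            norm_integral_le_integral_norm (fun ω => fA lam A (X ω + 1) - fA lam A (Xs ω))
      _ ≤ ∫ ω, c * ((X ω : ℝ) + 1 - (Xs ω : ℝ)) := by
          have habsInt : Integrable (fun ω => |fA lam A (X ω + 1) - fA lam A (Xs ω)|) ℙ :=
            (hI2.sub hI4).abs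
          exact integral_mono_ae habsInt hIcb habs
      _ = c * ∫ ω, ((X ω : ℝ) + 1 - (Xs ω : ℝ)) := integral_const_mul c _
  -- finish
  rw [hdiff, abs_mul, abs_of_pos hlam0]
  calc lam * |∫ ω, (fA lam A (X ω + 1) - fA lam A (Xs ω))|
      ≤ lam * (c * ∫ ω, ((X ω : ℝ) + 1 - (Xs ω : ℝ))) :=
        mul_le_mul_of_nonneg_left hbound hlam0.le
    _ = (lam * c) * ∫ ω, ((X ω : ℝ) + 1 - (Xs ω : ℝ)) := by ring
    _ = min 1 lam * ∫ ω, ((X ω : ℝ) + 1 - (Xs ω : ℝ)) := by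
        rw [hc, lam_mul_min hlam0]
end
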